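/- Let p be a proper sampling on [n], let A_1,…,A_n be real d×m matrices, φ_i : ℝ^m → ℝ differentiable, λ_i > 0, f_i(x) := φ_i(A_i^⊤ x), f := ∑_i λ_i f_i, and let v ∈ ℝ^n with v_i > 0 satisfy the ESO inequality: ∑_{C⊆[n]} p_C ‖∑_{i∈C} A_i h_i‖^2 ≤ ∑_{i=1}^n p_i v_i ‖h_i‖^2 for all h_1,…,h_n ∈ ℝ^m. Fix x, x* ∈ ℝ^d and a_1,…,a_n ∈ ℝ^m, and define g(C) := ∑_{i=1}^n λ_i A_i a_i + ∑_{i∈C} (λ_i/p_i) A_i (∇φ_i(A_i^⊤ x) − a_i). Then ∑_{C⊆[n]} p_C ‖g(C) − ∇f(x)‖^2 ≤ 2 ∑_{i=1}^n p_i^{-1} v_i λ_i^2 ‖∇φ_i(A_i^⊤ x) − ∇φ_i(A_i^⊤ x*)‖^2 + 2 ∑_{i=1}^n p_i^{-1} v_i λ_i^2 ‖a_i − ∇φ_i(A_i^⊤ x*)‖^2. -/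

import Mathlib

open Matrix

open InnerProductSpace
lemma adj_inner (d m : ℕ) (A : Matrix (Fin d) (Fin m) ℝ) (u : EuclideanSpace ℝ (Fin m))
    (z : EuclideanSpace ℝ (Fin d)) :
    (inner ℝ u (Matrix.toEuclideanLin Aᵀ z) : ℝ) = inner ℝ (Matrix.toEuclideanLin A u) z := by
  rw [show Aᵀ = Aᴴ by ext i j; simp [Matrix.conjTranspose_apply],
    Matrix.toEuclideanLin_conjTranspose_eq_adjoint, LinearMap.adjoint_inner_right]

lemma grad_F (n d m : ℕ) (A : Fin n → Matrix (Fin d) (Fin m) ℝ)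
    (φ : Fin n → EuclideanSpace ℝ (Fin m) → ℝ) (hdiff : ∀ i, Differentiable ℝ (φ i))
    (lam : Fin n → ℝ) (F : EuclideanSpace ℝ (Fin d) → ℝ)
    (hF : ∀ z, F z = ∑ i, lam i * φ i (Matrix.toEuclideanLin (A i)ᵀ z))
    (x : EuclideanSpace ℝ (Fin d)) :
    gradient F x = ∑ i, lam i •
      Matrix.toEuclideanLin (A i) (gradient (φ i) (Matrix.toEuclideanLin (A i)ᵀ x)) := by
  set w := ∑ i, lam i •
      Matrix.toEuclideanLin (A i) (gradient (φ i) (Matrix.toEuclideanLin (A i)ᵀ x)) with hw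
  have hFg : HasGradientAt F w x := by
    rw [hasGradientAt_iff_hasFDerivAt]
    have hFe : F = fun z => ∑ i, lam i * φ i (Matrix.toEuclideanLin (A i)ᵀ z) := funext hF
    rw [hFe]
    have key : ∀ i : Fin n, HasFDerivAt (fun z => lam i * φ i (Matrix.toEuclideanLin (A i)ᵀ z))
        (lam i • ((toDual ℝ (EuclideanSpace ℝ (Fin m))
            (gradient (φ i) (Matrix.toEuclideanLin (A i)ᵀ x))).comp
          (LinearMap.toContinuousLinearMap (Matrix.toEuclideanLin (A i)ᵀ)))) x := by
      intro i
      set L := LinearMap.toContinuousLinearMap (Matrix.toEuclideanLin (A i)ᵀ) with hL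
      have h1 : HasFDerivAt (φ i)
          (toDual ℝ (EuclideanSpace ℝ (Fin m)) (gradient (φ i) (Matrix.toEuclideanLin (A i)ᵀ x)))
          (Matrix.toEuclideanLin (A i)ᵀ x) :=
        ((hdiff i) _).hasGradientAt.hasFDerivAt
      have h2 : HasFDerivAt (fun z => φ i (Matrix.toEuclideanLin (A i)ᵀ z)) _ x :=
        h1.comp x L.hasFDerivAt
      exact h2.const_mul (lam i)
    have hsum := HasFDerivAt.fun_sum (fun i (_ : i ∈ Finset.univ) => key i)
    refine hsum.congr_fderiv ?_
    symm
    ext y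
    simp only [ContinuousLinearMap.coe_sum', Finset.sum_apply, ContinuousLinearMap.coe_smul',
      Pi.smul_apply, ContinuousLinearMap.coe_comp', Function.comp_apply,
      toDual_apply_apply, LinearMap.coe_toContinuousLinearMap', hw, smul_eq_mul]
    rw [sum_inner]
    exact Finset.sum_congr rfl fun i _ => by
      rw [real_inner_smul_left, ← adj_inner]
  exact hFg.gradient

set_option maxHeartbeats 1000000 in
/-- variance bound `E‖g − ∇f(x)‖²` for the SAGA-AS gradient
estimate in the composite case, under the ESO inequality. -/
theorem stmt_13 (n d m : ℕ)
    (p : Finset (Fin n) → ℝ) (hp0 : ∀ C, 0 ≤ p C) (hp1 : ∑ C : Finset (Fin n), p C = 1)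
    (pI : Fin n → ℝ) (hpI : ∀ i, pI i = ∑ C ∈ Finset.univ.filter (fun C => i ∈ C), p C)
    (hproper : ∀ i, 0 < pI i)
    (A : Fin n → Matrix (Fin d) (Fin m) ℝ)
    (φ : Fin n → EuclideanSpace ℝ (Fin m) → ℝ)
    (hdiff : ∀ i, Differentiable ℝ (φ i))
    (lam : Fin n → ℝ) (hlam : ∀ i, 0 < lam i)
    (F : EuclideanSpace ℝ (Fin d) → ℝ)
    (hF : ∀ z, F z = ∑ i, lam i * φ i (Matrix.toEuclideanLin (A i)ᵀ z))
    (v : Fin n → ℝ) (hv : ∀ i, 0 < v i)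
    (hESO : ∀ h : Fin n → EuclideanSpace ℝ (Fin m),
        ∑ C : Finset (Fin n), p C * ‖∑ i ∈ C, Matrix.toEuclideanLin (A i) (h i)‖ ^ 2
          ≤ ∑ i, pI i * v i * ‖h i‖ ^ 2)
    (x xstar : EuclideanSpace ℝ (Fin d)) (a : Fin n → EuclideanSpace ℝ (Fin m)) :
    ∑ C : Finset (Fin n), p C *
        ‖((∑ i, lam i • Matrix.toEuclideanLin (A i) (a i))
            + ∑ i ∈ C, (lam i / pI i) •
                Matrix.toEuclideanLin (A i)
                  (gradient (φ i) (Matrix.toEuclideanLin (A i)ᵀ x) - a i))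
          - gradient F x‖ ^ 2
      ≤ 2 * (∑ i, (pI i)⁻¹ * v i * lam i ^ 2 *
            ‖gradient (φ i) (Matrix.toEuclideanLin (A i)ᵀ x)
              - gradient (φ i) (Matrix.toEuclideanLin (A i)ᵀ xstar)‖ ^ 2)
        + 2 * ∑ i, (pI i)⁻¹ * v i * lam i ^ 2 *
            ‖a i - gradient (φ i) (Matrix.toEuclideanLin (A i)ᵀ xstar)‖ ^ 2 := by
  set G : Fin n → EuclideanSpace ℝ (Fin m) :=
    fun i => gradient (φ i) (Matrix.toEuclideanLin (A i)ᵀ x) with hG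
  set Gs : Fin n → EuclideanSpace ℝ (Fin m) :=
    fun i => gradient (φ i) (Matrix.toEuclideanLin (A i)ᵀ xstar) with hGs
  set h : Fin n → EuclideanSpace ℝ (Fin m) := fun i => (lam i / pI i) • (G i - a i) with hh
  set X : Finset (Fin n) → EuclideanSpace ℝ (Fin d) :=
    fun C => ∑ i ∈ C, Matrix.toEuclideanLin (A i) (h i) with hX
  set S : EuclideanSpace ℝ (Fin d) :=
    ∑ i, pI i • Matrix.toEuclideanLin (A i) (h i) with hS
  have hpne : ∀ i, pI i ≠ 0 := fun i => (hproper i).ne'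
  have hgrad : gradient F x = ∑ i, lam i • Matrix.toEuclideanLin (A i) (G i) :=
    grad_F n d m A φ hdiff lam F hF x
  have hTh : ∀ i, Matrix.toEuclideanLin (A i) (h i)
      = (lam i / pI i) • Matrix.toEuclideanLin (A i) (G i - a i) := fun i => map_smul _ _ _
  have hpTh : ∀ i, pI i • Matrix.toEuclideanLin (A i) (h i)
      = lam i • Matrix.toEuclideanLin (A i) (G i)
        - lam i • Matrix.toEuclideanLin (A i) (a i) := by
    intro i
    rw [hTh i, smul_smul, mul_div_cancel₀ _ (hpne i), map_sub, smul_sub]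
  -- rewrite each term in the LHS
  have hterm : ∀ C : Finset (Fin n),
      ((∑ i, lam i • Matrix.toEuclideanLin (A i) (a i))
          + ∑ i ∈ C, (lam i / pI i) •
              Matrix.toEuclideanLin (A i) (G i - a i))
        - gradient F x = X C - S := by
    intro C
    rw [hgrad, hS, hX]
    rw [Finset.sum_congr rfl (fun i _ => hpTh i), Finset.sum_sub_distrib,
      Finset.sum_congr rfl (fun i (_ : i ∈ C) => (hTh i).symm)]
    abel
  -- mean
  have hmean : ∑ C : Finset (Fin n), p C • X C = S := by
    rw [hS]
    have step1 : ∀ C : Finset (Fin n), p C • X C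
        = ∑ i : Fin n, if i ∈ C then p C • Matrix.toEuclideanLin (A i) (h i) else 0 := by
      intro C
      rw [hX, Finset.smul_sum]
      rw [Finset.sum_ite_mem, Finset.univ_inter]
    rw [Finset.sum_congr rfl fun C _ => step1 C, Finset.sum_comm]
    refine Finset.sum_congr rfl fun i _ => ?_
    have : ∀ C : Finset (Fin n),
        (if i ∈ C then p C • Matrix.toEuclideanLin (A i) (h i) else 0)
        = (if i ∈ C then p C else 0) • Matrix.toEuclideanLin (A i) (h i) := by
      intro C; by_cases hC : i ∈ C <;> simp [hC]
    rw [Finset.sum_congr rfl fun C _ => this C, ← Finset.sum_smul, hpI i, Finset.sum_filter]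
  -- variance expansion
  have hinner : ∑ C : Finset (Fin n), p C * inner ℝ (X C) S = (‖S‖ : ℝ) ^ 2 := by
    have : (inner ℝ S S : ℝ) = ‖S‖ ^ 2 := real_inner_self_eq_norm_sq S
    rw [← this, ← hmean, sum_inner]
    exact Finset.sum_congr rfl fun C _ => (real_inner_smul_left _ _ _).symm
  have hvar : ∑ C : Finset (Fin n), p C * ‖X C - S‖ ^ 2
      = (∑ C : Finset (Fin n), p C * ‖X C‖ ^ 2) - ‖S‖ ^ 2 := by
    have expand : ∀ C : Finset (Fin n), p C * ‖X C - S‖ ^ 2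
        = p C * ‖X C‖ ^ 2 - 2 * (p C * inner ℝ (X C) S) + p C * ‖S‖ ^ 2 := by
      intro C
      rw [norm_sub_sq_real]
      ring
    rw [Finset.sum_congr rfl fun C _ => expand C, Finset.sum_add_distrib,
      Finset.sum_sub_distrib, ← Finset.mul_sum, ← Finset.sum_mul, hinner, hp1]
    ring
  -- put together
  have key : ∑ C : Finset (Fin n), p C *
      ‖((∑ i, lam i • Matrix.toEuclideanLin (A i) (a i))
          + ∑ i ∈ C, (lam i / pI i) •
              Matrix.toEuclideanLin (A i) (G i - a i))
        - gradient F x‖ ^ 2 ≤ ∑ i, pI i * v i * ‖h i‖ ^ 2 := by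
    calc ∑ C : Finset (Fin n), p C * ‖_‖ ^ 2
        = ∑ C : Finset (Fin n), p C * ‖X C - S‖ ^ 2 :=
          Finset.sum_congr rfl fun C _ => by rw [hterm C]
      _ = (∑ C : Finset (Fin n), p C * ‖X C‖ ^ 2) - ‖S‖ ^ 2 := hvar
      _ ≤ ∑ C : Finset (Fin n), p C * ‖X C‖ ^ 2 := by
          have := sq_nonneg ‖S‖; linarith
      _ ≤ ∑ i, pI i * v i * ‖h i‖ ^ 2 := hESO h
  refine le_trans key ?_
  -- termwise bound
  have hterm2 : ∀ i : Fin n, pI i * v i * ‖h i‖ ^ 2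
      ≤ (pI i)⁻¹ * v i * lam i ^ 2 * (2 * ‖G i - Gs i‖ ^ 2 + 2 * ‖a i - Gs i‖ ^ 2) := by
    intro i
    have hnorm : ‖h i‖ ^ 2 = (lam i / pI i) ^ 2 * ‖G i - a i‖ ^ 2 := by
      rw [hh]
      simp only [norm_smul, Real.norm_eq_abs, mul_pow, sq_abs]
    have hcoef : pI i * v i * ((lam i / pI i) ^ 2 * ‖G i - a i‖ ^ 2)
        = (pI i)⁻¹ * v i * lam i ^ 2 * ‖G i - a i‖ ^ 2 := by
      have e : pI i * ((pI i)⁻¹ * (pI i)⁻¹) = (pI i)⁻¹ := by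
        rw [← mul_assoc, mul_inv_cancel₀ (hpne i), one_mul]
      rw [div_pow, div_eq_mul_inv, sq (pI i), mul_inv]
      linear_combination (v i * lam i ^ 2 * ‖G i - a i‖ ^ 2) * e
    rw [hnorm, hcoef]
    have hsq : ‖G i - a i‖ ^ 2 ≤ 2 * ‖G i - Gs i‖ ^ 2 + 2 * ‖a i - Gs i‖ ^ 2 := by
      have htri : ‖G i - a i‖ ≤ ‖G i - Gs i‖ + ‖a i - Gs i‖ := by
        have : G i - a i = (G i - Gs i) - (a i - Gs i) := by abel
        rw [this]
        exact norm_sub_le _ _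
      nlinarith [sq_nonneg (‖G i - Gs i‖ - ‖a i - Gs i‖), htri, norm_nonneg (G i - a i), norm_nonneg (G i - Gs i), norm_nonneg (a i - Gs i)]
    have hc : 0 ≤ (pI i)⁻¹ * v i * lam i ^ 2 :=
      mul_nonneg (mul_nonneg (inv_nonneg.2 (hproper i).le) (hv i).le) (sq_nonneg _)
    exact mul_le_mul_of_nonneg_left hsq hc
  calc ∑ i, pI i * v i * ‖h i‖ ^ 2
      ≤ ∑ i, (pI i)⁻¹ * v i * lam i ^ 2 * (2 * ‖G i - Gs i‖ ^ 2 + 2 * ‖a i - Gs i‖ ^ 2) :=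
        Finset.sum_le_sum fun i _ => hterm2 i
    _ = 2 * (∑ i, (pI i)⁻¹ * v i * lam i ^ 2 * ‖G i - Gs i‖ ^ 2)
        + 2 * ∑ i, (pI i)⁻¹ * v i * lam i ^ 2 * ‖a i - Gs i‖ ^ 2 := by
        rw [Finset.mul_sum, Finset.mul_sum, ← Finset.sum_add_distrib]
        exact Finset.sum_congr rfl fun i _ => by ring
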